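/- arXiv:1102.4268 — 3 statements merged into one kernel-verified Lean document; each statement's English description precedes it below -/
import Mathlib

section
/- There exists a constant C > 0 such that for every natural number N ≥ 1, the discrete convolution sum ∑_{k=0}^{N-1} 1/((N-k)·ln²(N-k+e)) · 1/((k+1)·ln²(k+1+e)) is bounded by C/((N+1)·ln²(N+e)). -/
open Real Finset

noncomputable def aa (x : ℝ) : ℝ := 1 / (x * (Real.log (x + Real.exp 1)) ^ 2)

lemma one_lt_e : (1:ℝ) < Real.exp 1 := by
  have := Real.add_one_le_exp (1:ℝ); linarith

lemma log_ge_one {x : ℝ} (hx : 0 ≤ x) : 1 ≤ Real.log (x + Real.exp 1) := by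
  have h := Real.log_le_log (Real.exp_pos 1) (by linarith : Real.exp 1 ≤ x + Real.exp 1)
  rwa [Real.log_exp] at h

lemma denom_pos {x : ℝ} (hx : 0 < x) (hx1 : 1 ≤ x ∨ 0 ≤ x) :
    0 < x * (Real.log (x + Real.exp 1)) ^ 2 := by
  have h1 : 1 ≤ Real.log (x + Real.exp 1) := log_ge_one (le_of_lt hx)
  positivity

lemma aa_pos {x : ℝ} (hx : 0 < x) : 0 < aa x := by
  have := denom_pos hx (Or.inr hx.le)
  unfold aa; positivity

lemma aa_anti {x y : ℝ} (hx : 0 < x) (hxy : x ≤ y) : aa y ≤ aa x := by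
  unfold aa
  have h1 : 1 ≤ Real.log (x + Real.exp 1) := log_ge_one hx.le
  have h2 : Real.log (x + Real.exp 1) ≤ Real.log (y + Real.exp 1) :=
    Real.log_le_log (by have := Real.exp_pos 1; linarith) (by linarith)
  apply one_div_le_one_div_of_le (denom_pos hx (Or.inr hx.le))
  have : (Real.log (x + Real.exp 1))^2 ≤ (Real.log (y + Real.exp 1))^2 := by nlinarith
  nlinarith

lemma telescope (k : ℕ) :
    aa ((k:ℝ) + 1) ≤ (1 + Real.exp 1) *
      (1 / Real.log ((k:ℝ) + Real.exp 1) - 1 / Real.log ((k:ℝ) + 1 + Real.exp 1)) := by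
  set e := Real.exp 1 with he
  have he1 : (1:ℝ) < e := one_lt_e
  have hk : (0:ℝ) ≤ (k:ℝ) := Nat.cast_nonneg k
  set L1 := Real.log ((k:ℝ) + e) with hL1def
  set L2 := Real.log ((k:ℝ) + 1 + e) with hL2def
  have hL1 : 1 ≤ L1 := log_ge_one hk
  have hL2 : 1 ≤ L2 := log_ge_one (by linarith)
  have hL12 : L1 ≤ L2 := Real.log_le_log (by linarith) (by linarith)
  -- log difference lower bound
  have hdiff : 1 / ((k:ℝ) + 1 + e) ≤ L2 - L1 := by
    have hpos : (0:ℝ) < (k:ℝ) + e := by linarith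
    have hratio : Real.log (((k:ℝ) + e) / ((k:ℝ) + 1 + e)) ≤
        ((k:ℝ) + e) / ((k:ℝ) + 1 + e) - 1 :=
      Real.log_le_sub_one_of_pos (by positivity)
    rw [Real.log_div (by positivity) (by positivity)] at hratio
    have h2 : ((k:ℝ) + e) / ((k:ℝ) + 1 + e) - 1 = -(1 / ((k:ℝ) + 1 + e)) := by
      field_simp
      ring
    rw [h2] at hratio
    rw [← hL1def, ← hL2def] at hratio
    linarith
  have hsub : 1 / L1 - 1 / L2 = (L2 - L1) / (L1 * L2) := by
    field_simp
  rw [hsub]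
  have hstep : 1 / (((k:ℝ) + 1 + e) * L2 ^ 2) ≤ (L2 - L1) / (L1 * L2) := by
    have hone : 1 ≤ (L2 - L1) * ((k:ℝ) + 1 + e) := by
      have hp : (0:ℝ) < (k:ℝ) + 1 + e := by linarith
      rw [div_le_iff₀ hp] at hdiff
      linarith [hdiff]
    rw [div_le_div_iff₀ (by positivity) (by positivity)]
    nlinarith [sq_nonneg L2, hL12, hL2, hL1]
  have hfinal : aa ((k:ℝ) + 1) ≤ (1 + e) * (1 / (((k:ℝ) + 1 + e) * L2 ^ 2)) := by
    unfold aa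
    rw [← hL2def, mul_one_div]
    rw [div_le_div_iff₀ (by positivity) (by positivity)]
    nlinarith [mul_nonneg (mul_nonneg (by linarith : (0:ℝ) ≤ e) hk) (sq_nonneg L2)]
  calc aa ((k:ℝ) + 1) ≤ (1 + e) * (1 / (((k:ℝ) + 1 + e) * L2 ^ 2)) := hfinal
    _ ≤ (1 + e) * ((L2 - L1) / (L1 * L2)) := by
        apply mul_le_mul_of_nonneg_left hstep (by linarith)

lemma sum_aa (N : ℕ) :
    ∑ k ∈ Finset.range N, aa ((k:ℝ) + 1) ≤ 1 + Real.exp 1 := by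
  set e := Real.exp 1 with he
  have he1 : (1:ℝ) < e := one_lt_e
  have h1 : ∑ k ∈ Finset.range N, aa ((k:ℝ) + 1) ≤
      ∑ k ∈ Finset.range N, (1 + e) *
        (1 / Real.log ((k:ℝ) + e) - 1 / Real.log ((k:ℝ) + 1 + e)) := by
    apply Finset.sum_le_sum
    intro k _
    exact telescope k
  have h2 : ∑ k ∈ Finset.range N, (1 + e) *
        (1 / Real.log ((k:ℝ) + e) - 1 / Real.log ((k:ℝ) + 1 + e)) =
      (1 + e) * (1 / Real.log ((0:ℝ) + e) - 1 / Real.log ((N:ℝ) + e)) := by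
    rw [← Finset.mul_sum]
    congr 1
    have := Finset.sum_range_sub' (f := fun k : ℕ => 1 / Real.log ((k:ℝ) + e)) N
    simp only [Nat.cast_add, Nat.cast_one] at this ⊢
    convert this using 2 with k
    push_cast; ring_nf
  rw [h2] at h1
  have h3 : 0 ≤ 1 / Real.log ((N:ℝ) + e) := by
    have := log_ge_one (Nat.cast_nonneg N); positivity
  have h4 : Real.log ((0:ℝ) + e) = 1 := by
    simp [he, Real.log_exp]
  rw [h4] at h1
  nlinarith

lemma half_bound {N : ℕ} (hN : 1 ≤ N) {m : ℝ} (hm : ((N:ℝ) + 1) / 2 ≤ m) :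
    aa m ≤ 8 / (((N:ℝ) + 1) * (Real.log ((N:ℝ) + Real.exp 1)) ^ 2) := by
  set e := Real.exp 1 with he
  have he1 : (1:ℝ) < e := one_lt_e
  have hN1 : (1:ℝ) ≤ (N:ℝ) := by exact_mod_cast hN
  have hhalf : (0:ℝ) < ((N:ℝ) + 1) / 2 := by linarith
  have h1 : aa m ≤ aa (((N:ℝ) + 1) / 2) := aa_anti hhalf hm
  refine h1.trans ?_
  unfold aa
  set L := Real.log (((N:ℝ) + 1) / 2 + e) with hLdef
  set M := Real.log ((N:ℝ) + e) with hMdef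
  have hM1 : 1 ≤ M := log_ge_one (by linarith)
  have hL1 : 1 ≤ L := log_ge_one (by linarith)
  have hML : M ≤ 2 * L := by
    have hsq : (N:ℝ) + e ≤ (((N:ℝ) + 1) / 2 + e) ^ 2 := by nlinarith
    have := Real.log_le_log (by linarith : (0:ℝ) < (N:ℝ) + e) hsq
    rw [Real.log_pow] at this
    rw [hMdef, hLdef]
    push_cast at this
    linarith
  have hM2 : M ^ 2 ≤ 4 * L ^ 2 := by nlinarith
  rw [div_le_div_iff₀ (by positivity) (by positivity)]
  nlinarith [sq_nonneg L, sq_nonneg M]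

/-- Discrete convolution bound: there is `C > 0` such that for all `N ≥ 1`,
`∑_{k=0}^{N-1} 1/((N-k)·ln²(N-k+e)) · 1/((k+1)·ln²(k+1+e)) ≤ C/((N+1)·ln²(N+e))`. -/
theorem discrete_convolution_bound :
    ∃ C : ℝ, 0 < C ∧ ∀ N : ℕ, 1 ≤ N →
      ∑ k ∈ Finset.range N,
          (1 / (((N : ℝ) - k) * (Real.log ((N : ℝ) - k + Real.exp 1)) ^ 2)) *
          (1 / (((k : ℝ) + 1) * (Real.log ((k : ℝ) + 1 + Real.exp 1)) ^ 2))
        ≤ C / (((N : ℝ) + 1) * (Real.log ((N : ℝ) + Real.exp 1)) ^ 2) := by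
  set e := Real.exp 1 with he
  have he1 : (1:ℝ) < e := one_lt_e
  refine ⟨16 * (1 + e), by linarith, ?_⟩
  intro N hN
  have hN1 : (1:ℝ) ≤ (N:ℝ) := by exact_mod_cast hN
  set B := 8 / (((N:ℝ) + 1) * (Real.log ((N:ℝ) + e)) ^ 2) with hBdef
  have hM1 : 1 ≤ Real.log ((N:ℝ) + e) := log_ge_one (by linarith)
  have hBpos : 0 < B := by rw [hBdef]; positivity
  -- termwise bound
  have hterm : ∀ k ∈ Finset.range N,
      (1 / (((N : ℝ) - k) * (Real.log ((N : ℝ) - k + e)) ^ 2)) *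
      (1 / (((k : ℝ) + 1) * (Real.log ((k : ℝ) + 1 + e)) ^ 2))
        ≤ B * (aa ((N:ℝ) - k) + aa ((k:ℝ) + 1)) := by
    intro k hk
    rw [Finset.mem_range] at hk
    have hkN : (k:ℝ) < (N:ℝ) := by exact_mod_cast hk
    have hu : (1:ℝ) ≤ (N:ℝ) - k := by
      have : (k:ℝ) + 1 ≤ (N:ℝ) := by exact_mod_cast hk
      linarith
    have hv : (1:ℝ) ≤ (k:ℝ) + 1 := by have := Nat.cast_nonneg (α := ℝ) k; linarith
    have hupos : (0:ℝ) < (N:ℝ) - k := by linarith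
    have hvpos : (0:ℝ) < (k:ℝ) + 1 := by linarith
    have hau : 0 < aa ((N:ℝ) - k) := aa_pos hupos
    have hav : 0 < aa ((k:ℝ) + 1) := aa_pos hvpos
    have hsum : ((N:ℝ) - k) + ((k:ℝ) + 1) = (N:ℝ) + 1 := by ring
    have hgoal_eq : (1 / (((N : ℝ) - k) * (Real.log ((N : ℝ) - k + e)) ^ 2)) *
      (1 / (((k : ℝ) + 1) * (Real.log ((k : ℝ) + 1 + e)) ^ 2)) =
      aa ((N:ℝ) - k) * aa ((k:ℝ) + 1) := by unfold aa; simp only [he]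
    rw [hgoal_eq]
    rcases le_or_gt (((N:ℝ) + 1) / 2) ((N:ℝ) - k) with hcase | hcase
    · have h1 : aa ((N:ℝ) - k) ≤ B := half_bound hN hcase
      calc aa ((N:ℝ) - k) * aa ((k:ℝ) + 1) ≤ B * aa ((k:ℝ) + 1) := by
            apply mul_le_mul_of_nonneg_right h1 hav.le
        _ ≤ B * (aa ((N:ℝ) - k) + aa ((k:ℝ) + 1)) := by nlinarith
    · have hcase' : (((N:ℝ) + 1) / 2) ≤ (k:ℝ) + 1 := by linarith
      have h1 : aa ((k:ℝ) + 1) ≤ B := half_bound hN hcase'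
      calc aa ((N:ℝ) - k) * aa ((k:ℝ) + 1) ≤ aa ((N:ℝ) - k) * B := by
            apply mul_le_mul_of_nonneg_left h1 hau.le
        _ ≤ B * (aa ((N:ℝ) - k) + aa ((k:ℝ) + 1)) := by nlinarith
  have hsum1 : ∑ k ∈ Finset.range N,
      (1 / (((N : ℝ) - k) * (Real.log ((N : ℝ) - k + e)) ^ 2)) *
      (1 / (((k : ℝ) + 1) * (Real.log ((k : ℝ) + 1 + e)) ^ 2))
        ≤ ∑ k ∈ Finset.range N, B * (aa ((N:ℝ) - k) + aa ((k:ℝ) + 1)) :=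
    Finset.sum_le_sum hterm
  -- reflect sum
  have hreflect : ∑ k ∈ Finset.range N, aa ((N:ℝ) - k) =
      ∑ k ∈ Finset.range N, aa ((k:ℝ) + 1) := by
    rw [← Finset.sum_range_reflect (fun k => aa ((k:ℝ) + 1)) N]
    apply Finset.sum_congr rfl
    intro k hk
    rw [Finset.mem_range] at hk
    congr 1
    have h1 : (1:ℕ) ≤ N := hN
    have h2 : k ≤ N - 1 := by omega
    push_cast [Nat.cast_sub h1, Nat.cast_sub h2]
    ring
  have hsum2 : ∑ k ∈ Finset.range N, B * (aa ((N:ℝ) - k) + aa ((k:ℝ) + 1)) =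
      B * (2 * ∑ k ∈ Finset.range N, aa ((k:ℝ) + 1)) := by
    rw [← Finset.mul_sum, Finset.sum_add_distrib, hreflect]
    ring
  have hS := sum_aa N
  have hSnn : 0 ≤ ∑ k ∈ Finset.range N, aa ((k:ℝ) + 1) := by
    apply Finset.sum_nonneg
    intro k _
    exact (aa_pos (by positivity : (0:ℝ) < (k:ℝ) + 1)).le
  have hfinal : B * (2 * ∑ k ∈ Finset.range N, aa ((k:ℝ) + 1)) ≤ B * (2 * (1 + e)) := by
    apply mul_le_mul_of_nonneg_left (by linarith) hBpos.le
  have hB16 : B * (2 * (1 + e)) = 16 * (1 + e) / (((N:ℝ) + 1) * (Real.log ((N:ℝ) + e)) ^ 2) := by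
    rw [hBdef]; ring
  calc ∑ k ∈ Finset.range N,
      (1 / (((N : ℝ) - k) * (Real.log ((N : ℝ) - k + e)) ^ 2)) *
      (1 / (((k : ℝ) + 1) * (Real.log ((k : ℝ) + 1 + e)) ^ 2))
      ≤ B * (2 * ∑ k ∈ Finset.range N, aa ((k:ℝ) + 1)) := by rw [← hsum2]; exact hsum1
    _ ≤ B * (2 * (1 + e)) := hfinal
    _ = _ := hB16
end

section
/- There exists a constant C > 0 such that for all real numbers s and N·T with 0 ≤ s ≤ N·T (T > 0 fixed), the integral ∫₀^{NT} 1/((NT-s+1)·ln²(NT-s+e)) · 1/((s+1)·ln²(s+e)) ds is bounded by C/((NT/2+1)·ln²(NT/2+e)). -/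
open Real MeasureTheory intervalIntegral

noncomputable def ccb_f (s : ℝ) : ℝ := 1 / ((s + 1) * (Real.log (s + Real.exp 1)) ^ 2)

lemma ccb_log_ge (s : ℝ) (hs : 0 ≤ s) : 1 ≤ Real.log (s + Real.exp 1) := by
  have h := Real.log_le_log (Real.exp_pos 1) (by linarith : Real.exp 1 ≤ s + Real.exp 1)
  simpa [Real.log_exp] using h

lemma ccb_den_pos (s : ℝ) (hs : 0 ≤ s) : 0 < (s + 1) * (Real.log (s + Real.exp 1)) ^ 2 := by
  have h := ccb_log_ge s hs
  positivity

lemma ccb_f_nonneg (s : ℝ) (hs : 0 ≤ s) : 0 ≤ ccb_f s :=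
  le_of_lt (by unfold ccb_f; exact one_div_pos.2 (ccb_den_pos s hs))


lemma ccb_f_antitone {a b : ℝ} (ha : 0 ≤ a) (hab : a ≤ b) : ccb_f b ≤ ccb_f a := by
  have hb : (0:ℝ) ≤ b := le_trans ha hab
  have hla := ccb_log_ge a ha
  have hlb := ccb_log_ge b hb
  unfold ccb_f
  apply one_div_le_one_div_of_le (ccb_den_pos a ha)
  have hlog : Real.log (a + Real.exp 1) ≤ Real.log (b + Real.exp 1) :=
    Real.log_le_log (by positivity) (by linarith)
  have h2 : (Real.log (a + Real.exp 1))^2 ≤ (Real.log (b + Real.exp 1))^2 := by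
    apply pow_le_pow_left₀ (by linarith) hlog 2
  apply mul_le_mul (by linarith) h2 (by positivity) (by linarith)

lemma ccb_f_contOn : ContinuousOn ccb_f (Set.Ici 0) := by
  unfold ccb_f
  apply ContinuousOn.div continuousOn_const
  · apply ContinuousOn.mul
    · fun_prop
    · apply ContinuousOn.pow
      apply ContinuousOn.log (by fun_prop)
      intro x hx
      have : (0:ℝ) ≤ x := hx
      positivity
  · intro x hx
    exact (ccb_den_pos x hx).ne'

lemma ccb_f_integrable {a b : ℝ} (ha : 0 ≤ a) (hb : 0 ≤ b) :
    IntervalIntegrable ccb_f volume a b := by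
  apply ContinuousOn.intervalIntegrable
  apply ccb_f_contOn.mono
  intro x hx
  exact le_trans (le_min ha hb) hx.1

noncomputable def ccb_g (s : ℝ) : ℝ := 1 / ((s + Real.exp 1) * (Real.log (s + Real.exp 1)) ^ 2)

lemma ccb_hasDeriv (s : ℝ) (hs : 0 ≤ s) :
    HasDerivAt (fun t => -(Real.log (t + Real.exp 1))⁻¹) (ccb_g s) s := by
  have hse : (0:ℝ) < s + Real.exp 1 := by linarith [Real.exp_pos 1]
  have hlog := ccb_log_ge s hs
  have h1 : HasDerivAt (fun t : ℝ => t + Real.exp 1) 1 s := (hasDerivAt_id s).add_const _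
  have h2 : HasDerivAt (fun t => Real.log (t + Real.exp 1)) ((s + Real.exp 1)⁻¹ * 1) s :=
    by exact (Real.hasDerivAt_log hse.ne').comp s h1
  have h3 := (h2.inv (by linarith : Real.log (s + Real.exp 1) ≠ 0)).neg
  refine h3.congr_deriv ?_
  unfold ccb_g
  field_simp

lemma ccb_g_contOn : ContinuousOn ccb_g (Set.Ici 0) := by
  unfold ccb_g
  apply ContinuousOn.div continuousOn_const
  · apply ContinuousOn.mul
    · fun_prop
    · apply ContinuousOn.pow
      apply ContinuousOn.log (by fun_prop)
      intro x hx
      have hx' : (0:ℝ) ≤ x := hx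
      have := Real.exp_pos 1
      positivity
  · intro x hx
    have hx' : (0:ℝ) ≤ x := hx
    have h := ccb_log_ge x hx'
    have := Real.exp_pos 1
    positivity

lemma ccb_g_integrable {a b : ℝ} (ha : 0 ≤ a) (hb : 0 ≤ b) :
    IntervalIntegrable ccb_g volume a b := by
  apply ContinuousOn.intervalIntegrable
  apply ccb_g_contOn.mono
  intro x hx
  exact le_trans (le_min ha hb) hx.1

lemma ccb_integral_g_le (X : ℝ) (hX : 0 ≤ X) :
    ∫ s in (0:ℝ)..X, ccb_g s ≤ 1 := by
  rw [intervalIntegral.integral_eq_sub_of_hasDerivAt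
      (fun x hx => ccb_hasDeriv x (by
        rw [Set.uIcc_of_le hX] at hx; exact hx.1))
      (ccb_g_integrable le_rfl hX)]
  have h1 : Real.log (0 + Real.exp 1) = 1 := by simp [Real.log_exp]
  have h2 := ccb_log_ge X hX
  have h3 : 0 ≤ (Real.log (X + Real.exp 1))⁻¹ := by positivity
  rw [h1]
  simp only [inv_one]
  linarith

lemma ccb_integral_f_le (X : ℝ) (hX : 0 ≤ X) :
    ∫ s in (0:ℝ)..X, ccb_f s ≤ Real.exp 1 := by
  have hmono : ∫ s in (0:ℝ)..X, ccb_f s ≤ ∫ s in (0:ℝ)..X, Real.exp 1 * ccb_g s := by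
    apply intervalIntegral.integral_mono_on hX (ccb_f_integrable le_rfl hX)
      ((ccb_g_integrable le_rfl hX).const_mul _)
    intro x hx
    have hx0 : (0:ℝ) ≤ x := hx.1
    have hL := ccb_log_ge x hx0
    have he := Real.exp_pos 1
    have he1 : (1:ℝ) ≤ Real.exp 1 := Real.one_le_exp (by norm_num)
    unfold ccb_f ccb_g
    rw [mul_one_div, div_le_div_iff₀ (ccb_den_pos x hx0) (by positivity)]
    nlinarith [sq_nonneg (Real.log (x + Real.exp 1)), mul_nonneg hx0 (sq_nonneg (Real.log (x + Real.exp 1)))]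
  rw [intervalIntegral.integral_const_mul] at hmono
  have := ccb_integral_g_le X hX
  nlinarith [Real.exp_pos 1]

/-- Continuous convolution bound: for fixed `T > 0` there is `C > 0` such that for
every positive integer `N`,
`∫₀^{NT} 1/((NT-s+1)·ln²(NT-s+e)) · 1/((s+1)·ln²(s+e)) ds ≤ C/((NT/2+1)·ln²(NT/2+e))`. -/
theorem continuous_convolution_bound (T : ℝ) (hT : 0 < T) :
    ∃ C : ℝ, 0 < C ∧ ∀ N : ℕ, 1 ≤ N →
      (∫ s in (0 : ℝ)..(N : ℝ) * T,
          (1 / (((N : ℝ) * T - s + 1) * (Real.log ((N : ℝ) * T - s + Real.exp 1)) ^ 2)) *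
          (1 / ((s + 1) * (Real.log (s + Real.exp 1)) ^ 2)))
        ≤ C / (((N : ℝ) * T / 2 + 1) * (Real.log ((N : ℝ) * T / 2 + Real.exp 1)) ^ 2) := by
  refine ⟨2 * Real.exp 1, by positivity, fun N hN => ?_⟩
  have hN1 : (1:ℝ) ≤ (N:ℝ) := by exact_mod_cast hN
  set M : ℝ := (N : ℝ) * T with hMdef
  have hM : 0 < M := by positivity
  have hM2 : (0:ℝ) ≤ M / 2 := by linarith
  have hM2M : M / 2 ≤ M := by linarith
  set G : ℝ → ℝ := fun s => ccb_f (M - s) * ccb_f s with hGdef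
  have hgoal_eq : (∫ s in (0 : ℝ)..M,
      (1 / ((M - s + 1) * (Real.log (M - s + Real.exp 1)) ^ 2)) *
      (1 / ((s + 1) * (Real.log (s + Real.exp 1)) ^ 2))) = ∫ s in (0:ℝ)..M, G s := rfl
  have hGcont : ContinuousOn G (Set.Icc 0 M) := by
    apply ContinuousOn.mul
    · apply ccb_f_contOn.comp (by fun_prop)
      intro x hx
      have : x ≤ M := hx.2
      exact (by linarith : (0:ℝ) ≤ M - x)
    · exact ccb_f_contOn.mono (fun x hx => hx.1)
  have hGint : ∀ a b : ℝ, 0 ≤ a → b ≤ M → a ≤ b → IntervalIntegrable G volume a b := by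
    intro a b ha hb hab
    apply ContinuousOn.intervalIntegrable
    apply hGcont.mono
    rw [Set.uIcc_of_le hab]
    exact Set.Icc_subset_Icc ha hb
  have h1 := hGint 0 (M/2) le_rfl hM2M hM2
  have h2 := hGint (M/2) M hM2 le_rfl hM2M
  have hsplit : (∫ s in (0:ℝ)..M, G s) = (∫ s in (0:ℝ)..(M/2), G s) + ∫ s in (M/2)..M, G s :=
    (intervalIntegral.integral_add_adjacent_intervals h1 h2).symm
  have hsym : (∫ s in (M/2)..M, G s) = ∫ s in (0:ℝ)..(M/2), G s := by
    have h := intervalIntegral.integral_comp_sub_left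
      (a := M/2) (b := M) (fun u => ccb_f u * ccb_f (M - u)) M
    simp only [sub_sub_cancel, sub_self] at h
    have hMM : M - M / 2 = M / 2 := by ring
    rw [hMM] at h
    calc (∫ s in (M/2)..M, G s) = ∫ x in (0:ℝ)..(M/2), ccb_f x * ccb_f (M - x) := h
      _ = ∫ s in (0:ℝ)..(M/2), G s := by
          simp only [hGdef]
          congr 1
          ext x
          ring
  have hI1 : (∫ s in (0:ℝ)..(M/2), G s) ≤ ccb_f (M/2) * Real.exp 1 := by
    have hbound : (∫ s in (0:ℝ)..(M/2), G s) ≤ ∫ s in (0:ℝ)..(M/2), ccb_f (M/2) * ccb_f s := by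
      apply intervalIntegral.integral_mono_on hM2 h1 ((ccb_f_integrable le_rfl hM2).const_mul _)
      intro x hx
      have hx0 : (0:ℝ) ≤ x := hx.1
      have hx2 : x ≤ M / 2 := hx.2
      exact mul_le_mul_of_nonneg_right
        (ccb_f_antitone hM2 (by linarith : M / 2 ≤ M - x)) (ccb_f_nonneg x hx0)
    rw [intervalIntegral.integral_const_mul] at hbound
    have hfle := ccb_integral_f_le (M/2) hM2
    have hfnn := ccb_f_nonneg (M/2) hM2
    nlinarith
  rw [hgoal_eq, hsplit, hsym]
  have hrhs : (2 * Real.exp 1) / ((M / 2 + 1) * (Real.log (M / 2 + Real.exp 1)) ^ 2)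
      = 2 * (ccb_f (M/2) * Real.exp 1) := by
    unfold ccb_f
    rw [one_div, div_eq_mul_inv]
    ring
  calc (∫ s in (0:ℝ)..(M/2), G s) + (∫ s in (0:ℝ)..(M/2), G s)
      ≤ 2 * (ccb_f (M/2) * Real.exp 1) := by linarith
    _ = (2 * Real.exp 1) / ((M / 2 + 1) * (Real.log (M / 2 + Real.exp 1)) ^ 2) := hrhs.symm
end

section
/- Let H be a Banach space, T > 0, A > 0, and (U(t,s))_{t ≥ s} an evolution family on H with ‖U(t,s)‖ ≤ C₀·e^{A(t-s)}, the composition law U(t,r)U(r,s) = U(t,s) for s ≤ r ≤ t, and the periodicity U(t+T, s+T) = U(t,s). Suppose there are operators χ₁, χ₂, ψ₁, ψ₂ ∈ ℒ(H) such that χ₁U(t, kT) = χ₁U(t,kT)χ₂ and ψ₂U((l+1)T, s) = U((l+1)T,s)ψ₁ hold whenever 0 ≤ t - kT ≤ T and 0 ≤ (l+1)T - s ≤ T (finite propagation compressions), and such that ‖χ₂ U(mT, 0) ψ₂‖ ≤ C₁/((mT+1)·ln²(mT+e)) for all integers m ≥ m₀. Then there is C₂ > 0 such that for all t ≥ s with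 t - s ≥ (m₀+2)T: ‖χ₁ U(t,s) ψ₁‖ ≤ C₂/((t-s+1)·ln²(t-s+e)). -/
open Real

set_option maxHeartbeats 1000000 in
/-- Final step of Theorem 1: decay of `‖χ₂ U(mT,0) ψ₂‖` along multiples of the
period, together with the evolution-family structure and finite-propagation
compressions, yields the full local energy decay
`‖χ₁ U(t,s) ψ₁‖ ≤ C₂/((t-s+1)·ln²(t-s+e))` for `t - s ≥ (m₀+2)T`. -/
theorem local_energy_decay_from_period_decay
    {H : Type*} [NormedAddCommGroup H] [NormedSpace ℂ H] [CompleteSpace H]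
    (T A C₀ C₁ : ℝ) (hT : 0 < T) (hA : 0 < A) (hC₀ : 0 < C₀) (hC₁ : 0 < C₁)
    (m₀ : ℕ) (U : ℝ → ℝ → (H →L[ℂ] H)) (χ₁ χ₂ ψ₁ ψ₂ : H →L[ℂ] H)
    (hbound : ∀ t s : ℝ, s ≤ t → ‖U t s‖ ≤ C₀ * Real.exp (A * (t - s)))
    (hcomp : ∀ s r t : ℝ, s ≤ r → r ≤ t → U t r * U r s = U t s)
    (hper : ∀ t s : ℝ, U (t + T) (s + T) = U t s)
    (hχ : ∀ (t : ℝ) (k : ℤ), 0 ≤ t - (k : ℝ) * T → t - (k : ℝ) * T ≤ T →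
      χ₁ * U t ((k : ℝ) * T) = χ₁ * U t ((k : ℝ) * T) * χ₂)
    (hψ : ∀ (s : ℝ) (l : ℤ), 0 ≤ ((l : ℝ) + 1) * T - s → ((l : ℝ) + 1) * T - s ≤ T →
      ψ₂ * U (((l : ℝ) + 1) * T) s = U (((l : ℝ) + 1) * T) s * ψ₁)
    (hdecay : ∀ m : ℕ, m₀ ≤ m →
      ‖χ₂ * U ((m : ℝ) * T) 0 * ψ₂‖
        ≤ C₁ / (((m : ℝ) * T + 1) * (Real.log ((m : ℝ) * T + Real.exp 1)) ^ 2)) :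
    ∃ C₂ : ℝ, 0 < C₂ ∧ ∀ t s : ℝ, s ≤ t → ((m₀ : ℝ) + 2) * T ≤ t - s →
      ‖χ₁ * U t s * ψ₁‖ ≤ C₂ / ((t - s + 1) * (Real.log (t - s + Real.exp 1)) ^ 2) := by
  -- shift lemma
  have hshift : ∀ (n : ℤ) (a b : ℝ), U (a + (n : ℝ) * T) (b + (n : ℝ) * T) = U a b := by
    intro n
    induction n using Int.induction_on with
    | zero => intro a b; simp
    | succ n ih =>
        intro a b
        have h1 : a + ((n : ℤ) + 1 : ℤ) * T = (a + (n : ℝ) * T) + T := by push_cast; ring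
        have h2 : b + ((n : ℤ) + 1 : ℤ) * T = (b + (n : ℝ) * T) + T := by push_cast; ring
        push_cast at h1 h2 ⊢
        rw [h1, h2, hper]
        exact ih a b
    | pred n ih =>
        intro a b
        have h1 : a + (-(n : ℝ) - 1) * T + T = a + (-(n : ℝ)) * T := by ring
        have h2 : b + (-(n : ℝ) - 1) * T + T = b + (-(n : ℝ)) * T := by ring
        have := hper (a + (-(n : ℝ) - 1) * T) (b + (-(n : ℝ) - 1) * T)
        rw [h1, h2] at this
        push_cast at ih ⊢
        rw [show a + (-(n : ℝ) - 1) * T = a + (-(n : ℝ) - 1) * T from rfl]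
        calc U (a + (-(n : ℝ) - 1) * T) (b + (-(n : ℝ) - 1) * T)
            = U (a + (-(n : ℝ)) * T) (b + (-(n : ℝ)) * T) := this.symm
          _ = U a b := ih a b
  -- constants
  set c : ℝ := (2 * T + 1) * (1 + Real.log (2 * T + 1)) ^ 2 with hc
  have hlog2T : 0 ≤ Real.log (2 * T + 1) := Real.log_nonneg (by linarith)
  have hcpos : 0 < c := by positivity
  refine ⟨(‖χ₁‖ + 1) * C₀ * Real.exp (A * T) * C₀ * Real.exp (A * T) * C₁ * c, by positivity, ?_⟩
  intro t s hst hts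
  set k : ℤ := ⌊t / T⌋ with hk
  set l : ℤ := ⌊s / T⌋ with hl
  have hkt : (k : ℝ) * T ≤ t := by
    have h := Int.floor_le (t / T)
    rw [le_div_iff₀ hT] at h
    exact h
  have htk : t < ((k : ℝ) + 1) * T := by
    have := Int.lt_floor_add_one (t / T)
    rw [div_lt_iff₀ hT] at this
    push_cast at this ⊢
    linarith
  have hls : (l : ℝ) * T ≤ s := by
    have h := Int.floor_le (s / T)
    rw [le_div_iff₀ hT] at h
    exact h
  have hsl : s < ((l : ℝ) + 1) * T := by
    have := Int.lt_floor_add_one (s / T)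
    rw [div_lt_iff₀ hT] at this
    push_cast at this ⊢
    linarith
  -- k - l - 1 ≥ m₀ + 1
  have hklR : ((m₀ : ℝ) + 1) < (k : ℝ) - (l : ℝ) := by nlinarith
  have hklZ : (m₀ : ℤ) + 2 ≤ k - l := by
    have : ((m₀ : ℤ) + 1 : ℤ) < k - l := by exact_mod_cast (by push_cast; linarith : ((((m₀:ℤ)+1 : ℤ)):ℝ) < ((k - l : ℤ) : ℝ))
    omega
  set m : ℕ := (k - l - 1).toNat with hm
  have hmcast : (m : ℝ) = (k : ℝ) - (l : ℝ) - 1 := by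
    have : ((m : ℤ) : ℝ) = ((k - l - 1 : ℤ) : ℝ) := by
      congr 1
      rw [hm, Int.toNat_of_nonneg (by omega)]
    push_cast at this
    linarith
  have hm₀m : m₀ ≤ m := by
    have : (m₀ : ℤ) + 1 ≤ (m : ℤ) := by rw [hm, Int.toNat_of_nonneg (by omega)]; omega
    omega
  -- ordering s ≤ (l+1)T ≤ kT ≤ t
  have h1 : s ≤ ((l : ℝ) + 1) * T := le_of_lt hsl
  have h2 : ((l : ℝ) + 1) * T ≤ (k : ℝ) * T := by
    have : (l : ℝ) + 1 ≤ (k : ℝ) := by linarith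
    nlinarith
  -- decomposition
  have hdec : U t s = U t ((k : ℝ) * T) * U ((k : ℝ) * T) (((l : ℝ) + 1) * T) * U (((l : ℝ) + 1) * T) s := by
    rw [hcomp _ _ _ h2 hkt, hcomp _ _ _ h1 (le_trans h2 hkt)]
  have hmid : U ((k : ℝ) * T) (((l : ℝ) + 1) * T) = U ((m : ℝ) * T) 0 := by
    have := hshift (l + 1) ((m : ℝ) * T) 0
    push_cast at this
    rw [show (m : ℝ) * T + ((l : ℝ) + 1) * T = (k : ℝ) * T by rw [hmcast]; ring,
        zero_add] at this
    exact this
  have hχ' : χ₁ * U t ((k : ℝ) * T) = χ₁ * U t ((k : ℝ) * T) * χ₂ :=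
    hχ t k (by linarith) (by nlinarith)
  have hψ' : U (((l : ℝ) + 1) * T) s * ψ₁ = ψ₂ * U (((l : ℝ) + 1) * T) s :=
    (hψ s l (by linarith) (by nlinarith)).symm
  have hid : χ₁ * U t s * ψ₁
      = (χ₁ * U t ((k : ℝ) * T)) * (χ₂ * U ((m : ℝ) * T) 0 * ψ₂) * U (((l : ℝ) + 1) * T) s := by
    calc χ₁ * U t s * ψ₁
        = (χ₁ * U t ((k : ℝ) * T)) * (U ((k : ℝ) * T) (((l : ℝ) + 1) * T)
            * (U (((l : ℝ) + 1) * T) s * ψ₁)) := by rw [hdec]; simp only [mul_assoc]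
      _ = (χ₁ * U t ((k : ℝ) * T) * χ₂) * (U ((m : ℝ) * T) 0
            * (ψ₂ * U (((l : ℝ) + 1) * T) s)) := by
              conv_lhs => rw [hχ']
              rw [hmid, hψ']
      _ = (χ₁ * U t ((k : ℝ) * T)) * (χ₂ * U ((m : ℝ) * T) 0 * ψ₂)
            * U (((l : ℝ) + 1) * T) s := by simp only [mul_assoc]
  -- norm bounds for outer factors
  have hout1 : ‖χ₁ * U t ((k : ℝ) * T)‖ ≤ (‖χ₁‖ + 1) * (C₀ * Real.exp (A * T)) := by
    calc ‖χ₁ * U t ((k : ℝ) * T)‖ ≤ ‖χ₁‖ * ‖U t ((k : ℝ) * T)‖ := norm_mul_le _ _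
      _ ≤ (‖χ₁‖ + 1) * (C₀ * Real.exp (A * T)) := by
          have hb := hbound t ((k : ℝ) * T) hkt
          have he : Real.exp (A * (t - (k : ℝ) * T)) ≤ Real.exp (A * T) :=
            Real.exp_le_exp.mpr (by nlinarith)
          have hU : ‖U t ((k : ℝ) * T)‖ ≤ C₀ * Real.exp (A * T) :=
            hb.trans (mul_le_mul_of_nonneg_left he hC₀.le)
          exact mul_le_mul (by linarith) hU (norm_nonneg _) (by positivity)
  have hout2 : ‖U (((l : ℝ) + 1) * T) s‖ ≤ C₀ * Real.exp (A * T) := by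
    have hb := hbound (((l : ℝ) + 1) * T) s h1
    have he : Real.exp (A * (((l : ℝ) + 1) * T - s)) ≤ Real.exp (A * T) :=
      Real.exp_le_exp.mpr (by nlinarith)
    exact hb.trans (mul_le_mul_of_nonneg_left he hC₀.le)
  -- decay of middle factor
  have hmidb := hdecay m hm₀m
  -- positivity of denominators
  have hmT : (0 : ℝ) ≤ (m : ℝ) * T := by positivity
  have hlog_m : 1 ≤ Real.log ((m : ℝ) * T + Real.exp 1) := by
    calc (1 : ℝ) = Real.log (Real.exp 1) := (Real.log_exp 1).symm
      _ ≤ _ := Real.log_le_log (Real.exp_pos 1) (by linarith)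
  have htspos : 0 < t - s := by nlinarith
  have hlog_ts : 1 ≤ Real.log (t - s + Real.exp 1) := by
    calc (1 : ℝ) = Real.log (Real.exp 1) := (Real.log_exp 1).symm
      _ ≤ _ := Real.log_le_log (Real.exp_pos 1) (by linarith)
  have hDm : 0 < ((m : ℝ) * T + 1) * (Real.log ((m : ℝ) * T + Real.exp 1)) ^ 2 := by nlinarith
  have hDts : 0 < (t - s + 1) * (Real.log (t - s + Real.exp 1)) ^ 2 := by nlinarith
  -- t - s ≤ mT + 2T
  have hts2 : t - s ≤ (m : ℝ) * T + 2 * T := by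
    have : t - s < ((k : ℝ) - (l : ℝ) + 1) * T := by nlinarith
    rw [hmcast]; nlinarith
  -- log comparison
  have hlogcmp : Real.log (t - s + Real.exp 1) ≤ (1 + Real.log (2 * T + 1)) * Real.log ((m : ℝ) * T + Real.exp 1) := by
    have e1 : (1 : ℝ) ≤ Real.exp 1 := by
      have := Real.add_one_le_exp (1 : ℝ); linarith
    have h3 : t - s + Real.exp 1 ≤ (2 * T + 1) * ((m : ℝ) * T + Real.exp 1) := by nlinarith
    have h4 : Real.log (t - s + Real.exp 1) ≤ Real.log ((2 * T + 1) * ((m : ℝ) * T + Real.exp 1)) :=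
      Real.log_le_log (by positivity) h3
    rw [Real.log_mul (by positivity) (by positivity)] at h4
    nlinarith
  -- denominator comparison: Dts ≤ c * Dm
  have hden : (t - s + 1) * (Real.log (t - s + Real.exp 1)) ^ 2
      ≤ c * (((m : ℝ) * T + 1) * (Real.log ((m : ℝ) * T + Real.exp 1)) ^ 2) := by
    have hA1 : t - s + 1 ≤ (2 * T + 1) * ((m : ℝ) * T + 1) := by nlinarith
    have hB1 : (Real.log (t - s + Real.exp 1)) ^ 2
        ≤ (1 + Real.log (2 * T + 1)) ^ 2 * (Real.log ((m : ℝ) * T + Real.exp 1)) ^ 2 := by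
      have h0 : 0 ≤ Real.log (t - s + Real.exp 1) := by linarith
      nlinarith [hlogcmp]
    rw [hc]
    nlinarith [sq_nonneg (Real.log (t - s + Real.exp 1)), sq_nonneg (Real.log ((m : ℝ) * T + Real.exp 1))]
  -- middle bound transferred
  have hmid2 : ‖χ₂ * U ((m : ℝ) * T) 0 * ψ₂‖ ≤ C₁ * c / ((t - s + 1) * (Real.log (t - s + Real.exp 1)) ^ 2) := by
    refine le_trans hmidb ?_
    rw [div_le_div_iff₀ hDm hDts]
    calc C₁ * ((t - s + 1) * Real.log (t - s + Real.exp 1) ^ 2)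
        ≤ C₁ * (c * (((m : ℝ) * T + 1) * Real.log ((m : ℝ) * T + Real.exp 1) ^ 2)) := by
          exact mul_le_mul_of_nonneg_left hden hC₁.le
      _ = C₁ * c * (((m : ℝ) * T + 1) * Real.log ((m : ℝ) * T + Real.exp 1) ^ 2) := by ring
  -- final chain
  rw [hid]
  have haux : ‖(χ₁ * U t ((k : ℝ) * T)) * (χ₂ * U ((m : ℝ) * T) 0 * ψ₂) * U (((l : ℝ) + 1) * T) s‖
      ≤ ‖χ₁ * U t ((k : ℝ) * T)‖ * ‖χ₂ * U ((m : ℝ) * T) 0 * ψ₂‖ * ‖U (((l : ℝ) + 1) * T) s‖ := by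
    calc ‖(χ₁ * U t ((k : ℝ) * T)) * (χ₂ * U ((m : ℝ) * T) 0 * ψ₂) * U (((l : ℝ) + 1) * T) s‖
        ≤ ‖(χ₁ * U t ((k : ℝ) * T)) * (χ₂ * U ((m : ℝ) * T) 0 * ψ₂)‖ * ‖U (((l : ℝ) + 1) * T) s‖ :=
          norm_mul_le _ _
      _ ≤ ‖χ₁ * U t ((k : ℝ) * T)‖ * ‖χ₂ * U ((m : ℝ) * T) 0 * ψ₂‖ * ‖U (((l : ℝ) + 1) * T) s‖ := by
          gcongr; exact norm_mul_le _ _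
  refine le_trans haux ?_
  have hmn : 0 ≤ ‖χ₂ * U ((m : ℝ) * T) 0 * ψ₂‖ := norm_nonneg _
  have h1n : 0 ≤ ‖χ₁ * U t ((k : ℝ) * T)‖ := norm_nonneg _
  have h2n : 0 ≤ ‖U (((l : ℝ) + 1) * T) s‖ := norm_nonneg _
  calc ‖χ₁ * U t ((k : ℝ) * T)‖ * ‖χ₂ * U ((m : ℝ) * T) 0 * ψ₂‖ * ‖U (((l : ℝ) + 1) * T) s‖
      ≤ ((‖χ₁‖ + 1) * (C₀ * Real.exp (A * T)))
          * (C₁ * c / ((t - s + 1) * (Real.log (t - s + Real.exp 1)) ^ 2))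
          * (C₀ * Real.exp (A * T)) := by
        have hq : 0 ≤ C₁ * c / ((t - s + 1) * (Real.log (t - s + Real.exp 1)) ^ 2) := by positivity
        exact mul_le_mul (mul_le_mul hout1 hmid2 hmn (by positivity)) hout2 h2n (by positivity)
    _ = (‖χ₁‖ + 1) * C₀ * Real.exp (A * T) * C₀ * Real.exp (A * T) * C₁ * c
          / ((t - s + 1) * (Real.log (t - s + Real.exp 1)) ^ 2) := by
        field_simp
end
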